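/- Let p be prime, g a generator of a cyclic group G of order p, and suppose the batch verification equation δ_0·v + ∑_{k∈I} δ_k·v_k = γ·(δ_0 + ∑_{k∈I} δ_k·a_k) in ZMod p fails for at least one index (i.e., (v, (v_k)) ≠ (γ, (γ·a_k))). Then the set of tuples (δ_0, (δ_k)_{k∈I}) ∈ (ZMod p)^{1+|I|} for which the equation nevertheless holds has cardinality exactly p^{|I|}; hence a uniformly random tuple satisfies it with probability 1/p. -/

import Mathlib

/-- Probabilistic soundness of the small-exponent test: if the key is not
well-formed, the set of exponent tuples satisfying the batch equation has
cardinality exactly p^|I|, i.e. a uniformly random tuple satisfies it with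
probability 1/p. -/
theorem dbe_ss_batch_verification_cheating_probability
    {p : ℕ} (hp : p.Prime) [NeZero p] {ι : Type} [Fintype ι] [DecidableEq ι]
    (v γ : ZMod p) (vk a : ι → ZMod p)
    (hbad : ¬ (v = γ ∧ ∀ k, vk k = γ * a k)) :
    Fintype.card {δ : ZMod p × (ι → ZMod p) //
        δ.1 * v + ∑ k, δ.2 k * vk k = γ * (δ.1 + ∑ k, δ.2 k * a k)} =
      p ^ (Fintype.card ι) ∧
    (Fintype.card {δ : ZMod p × (ι → ZMod p) //
        δ.1 * v + ∑ k, δ.2 k * vk k = γ * (δ.1 + ∑ k, δ.2 k * a k)} : ℚ) /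
      (Fintype.card (ZMod p × (ι → ZMod p)) : ℚ) = 1 / p := by
  haveI : Fact p.Prime := ⟨hp⟩
  -- the linear map whose kernel is the solution set
  set f : (ZMod p × (ι → ZMod p)) →ₗ[ZMod p] ZMod p :=
    { toFun := fun δ => δ.1 * (v - γ) + ∑ k, δ.2 k * (vk k - γ * a k)
      map_add' := by
        intro x y
        simp only [Prod.fst_add, Prod.snd_add, Pi.add_apply, add_mul]
        rw [Finset.sum_add_distrib]
        ring
      map_smul' := by
        intro c x
        simp only [Prod.smul_fst, Prod.smul_snd, Pi.smul_apply, smul_eq_mul,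
          RingHom.id_apply, Finset.mul_sum, mul_add, mul_assoc] } with hf
  have hcond : ∀ δ : ZMod p × (ι → ZMod p),
      (δ.1 * v + ∑ k, δ.2 k * vk k = γ * (δ.1 + ∑ k, δ.2 k * a k)) ↔ f δ = 0 := by
    intro δ
    simp only [hf, LinearMap.coe_mk, AddHom.coe_mk]
    rw [← sub_eq_zero (a := δ.1 * v + _)]
    constructor <;> intro h <;> rw [← h] <;> · simp [mul_sub, Finset.sum_sub_distrib,
      mul_add, Finset.mul_sum, mul_left_comm]; ring_nf
  have e : {δ : ZMod p × (ι → ZMod p) //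
      δ.1 * v + ∑ k, δ.2 k * vk k = γ * (δ.1 + ∑ k, δ.2 k * a k)} ≃
      LinearMap.ker f := Equiv.subtypeEquiv (Equiv.refl _) (by simpa using hcond)
  -- f is nonzero
  have hne : ∃ x, f x ≠ 0 := by
    rw [not_and_or] at hbad
    rcases hbad with h | h
    · exact ⟨(1, 0), by simp [hf, sub_eq_zero, h]⟩
    · push_neg at h
      obtain ⟨k0, hk0⟩ := h
      refine ⟨(0, Pi.single k0 1), ?_⟩
      simp only [hf, LinearMap.coe_mk, AddHom.coe_mk, zero_mul, zero_add]
      rw [Finset.sum_eq_single k0]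
      · simpa [sub_eq_zero] using hk0
      · intro b _ hb; simp [Pi.single_eq_of_ne hb]
      · simp
  have hsurj : Function.Surjective f := by
    obtain ⟨x, hx⟩ := hne
    intro c
    exact ⟨(c / f x) • x, by rw [map_smul, smul_eq_mul]; field_simp⟩
  -- cardinality of the kernel
  have hquot : Nat.card ((ZMod p × (ι → ZMod p)) ⧸ LinearMap.ker f) = p := by
    rw [Nat.card_congr (f.quotKerEquivOfSurjective hsurj).toEquiv, Nat.card_zmod]
  have htot : Nat.card (ZMod p × (ι → ZMod p)) = p ^ (Fintype.card ι + 1) := by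
    simp [Nat.card_eq_fintype_card, ZMod.card, pow_succ, mul_comm]
  have hker : Nat.card (LinearMap.ker f) = p ^ (Fintype.card ι) := by
    have h := Submodule.card_eq_card_quotient_mul_card (LinearMap.ker f)
    rw [htot, hquot, pow_succ, mul_comm (p ^ Fintype.card ι) p] at h
    exact Nat.eq_of_mul_eq_mul_right hp.pos (h.symm.trans (mul_comm p _))
  have h1 : Fintype.card {δ : ZMod p × (ι → ZMod p) //
      δ.1 * v + ∑ k, δ.2 k * vk k = γ * (δ.1 + ∑ k, δ.2 k * a k)} =
      p ^ (Fintype.card ι) := by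
    rw [← Nat.card_eq_fintype_card, Nat.card_congr e, hker]
  refine ⟨h1, ?_⟩
  have hp0 : (p : ℚ) ≠ 0 := Nat.cast_ne_zero.mpr hp.pos.ne'
  rw [h1]
  have : (Fintype.card (ZMod p × (ι → ZMod p)) : ℚ) = p ^ (Fintype.card ι + 1) := by
    rw [← Nat.card_eq_fintype_card]; exact_mod_cast congrArg Nat.cast htot
  rw [this, pow_succ]
  field_simp
  exact Nat.cast_pow p _
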